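/- Let V be a finite-dimensional Euclidean space and u, v ∈ V nonzero vectors such that u ≠ -c·v for all c > 0. Then the topological closure of H_u^int ∩ H_v^int equals H_u ∩ H_v, where H_w^int = {x : ⟨x,w⟩ < 0} and H_w = {x : ⟨x,w⟩ ≤ 0}. -/

import Mathlib

open Set

noncomputable section

def IsCone {V : Type*} [AddCommGroup V] [Module ℝ V] (C : Set V) : Prop :=
  (0 : V) ∈ C ∧ ∀ r : ℝ, 0 ≤ r → ∀ v ∈ C, r • v ∈ C

def IsConvexCone {V : Type*} [AddCommGroup V] [Module ℝ V] (C : Set V) : Prop :=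
  IsCone C ∧ ∀ u ∈ C, ∀ v ∈ C, u + v ∈ C

def IsMaxPointedCone {V : Type*} [AddCommGroup V] [Module ℝ V] (D : Set V) : Prop :=
  IsConvexCone D ∧ D ∩ (-D) = {0} ∧ D ∪ (-D) = Set.univ

def hatCone {V : Type*} [AddCommGroup V] [Module ℝ V] (X : Set V) : Set V :=
  {0} ∪ {v | ∃ r : ℝ, 0 ≤ r ∧ ∃ x ∈ X, v = r • x}

def sphereN (n : ℕ) : Set (EuclideanSpace ℝ (Fin (n + 1))) := Metric.sphere 0 1

def PhiPlus (n : ℕ) : Set (EuclideanSpace ℝ (Fin (n + 1))) :=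
  {x | x ∈ sphereN n ∧ ∃ m : Fin (n + 1), 0 < x m ∧ ∀ i, m < i → x i = 0}

def PhiMinus (n : ℕ) : Set (EuclideanSpace ℝ (Fin (n + 1))) := {x | -x ∈ PhiPlus n}

def Ln (n : ℕ) : Set (Set (EuclideanSpace ℝ (Fin (n + 1)))) :=
  {X | ∃ D, IsMaxPointedCone D ∧ X = D ∩ PhiPlus n}

theorem stmt6 {V : Type*} [NormedAddCommGroup V] [InnerProductSpace ℝ V]
    [FiniteDimensional ℝ V] (u v : V) (hu : u ≠ 0) (hv : v ≠ 0)
    (h : ∀ c : ℝ, 0 < c → u ≠ -(c • v)) :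
    closure ({x : V | (inner ℝ x u : ℝ) < 0} ∩ {x : V | (inner ℝ x v : ℝ) < 0}) =
      {x : V | (inner ℝ x u : ℝ) ≤ 0} ∩ {x : V | (inner ℝ x v : ℝ) ≤ 0} := by
  have hnu : (0:ℝ) < ‖u‖ := norm_pos_iff.2 hu
  have hnv : (0:ℝ) < ‖v‖ := norm_pos_iff.2 hv
  have hle : -(‖u‖ * ‖v‖) ≤ (inner ℝ u v : ℝ) := by
    have h1 := abs_real_inner_le_norm u v
    have h2 := neg_abs_le (inner ℝ u v : ℝ)
    linarith
  have hne : -(‖u‖ * ‖v‖) ≠ (inner ℝ u v : ℝ) := by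
    intro heq
    have hd : (inner ℝ u v : ℝ) / (‖u‖ * ‖v‖) = -1 := by
      rw [← heq, neg_div, div_self (by positivity)]
    obtain ⟨-, r, hr, hvr⟩ := (real_inner_div_norm_mul_norm_eq_neg_one_iff u v).1 hd
    have hru : u = -((-r⁻¹) • v) := by
      rw [hvr, smul_smul, neg_mul, inv_mul_cancel₀ hr.ne]
      simp
    exact h (-r⁻¹) (by simpa using inv_lt_zero.2 hr) hru
  have hcs : -(‖u‖ * ‖v‖) < (inner ℝ u v : ℝ) := lt_of_le_of_ne hle hne
  set x₀ : V := -(‖u‖⁻¹ • u + ‖v‖⁻¹ • v) with hx₀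
  have hiu : (inner ℝ x₀ u : ℝ) < 0 := by
    rw [hx₀, inner_neg_left, inner_add_left, real_inner_smul_left, real_inner_smul_left,
      real_inner_self_eq_norm_sq]
    rw [← real_inner_comm v u]
    have h3 : ‖u‖⁻¹ * ‖u‖ ^ 2 = ‖u‖ := by field_simp [sq]
    have h4 : ‖v‖⁻¹ * (-(‖u‖ * ‖v‖)) = -‖u‖ := by field_simp
    have h5 := mul_lt_mul_of_pos_left hcs (inv_pos.2 hnv)
    rw [h4] at h5
    linarith
  have hiv : (inner ℝ x₀ v : ℝ) < 0 := by
    rw [hx₀, inner_neg_left, inner_add_left, real_inner_smul_left, real_inner_smul_left,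
      real_inner_self_eq_norm_sq]
    have h3 : ‖v‖⁻¹ * ‖v‖ ^ 2 = ‖v‖ := by field_simp [sq]
    have h4 : ‖u‖⁻¹ * (-(‖u‖ * ‖v‖)) = -‖v‖ := by field_simp
    have h5 := mul_lt_mul_of_pos_left hcs (inv_pos.2 hnu)
    rw [h4] at h5
    linarith
  apply Subset.antisymm
  · apply closure_minimal
    · intro x hx
      have h1 : (inner ℝ x u : ℝ) ≤ 0 := hx.1.le
      have h2 : (inner ℝ x v : ℝ) ≤ 0 := hx.2.le
      exact ⟨h1, h2⟩
    · exact IsClosed.inter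
        (isClosed_le (Continuous.inner continuous_id continuous_const) continuous_const)
        (isClosed_le (Continuous.inner continuous_id continuous_const) continuous_const)
  · rintro x ⟨hxu, hxv⟩
    rw [mem_closure_iff_seq_limit]
    refine ⟨fun n => x + (1 / (n + 1 : ℝ)) • x₀, fun n => ⟨?_, ?_⟩, ?_⟩
    · show (inner ℝ (x + (1 / (n + 1 : ℝ)) • x₀) u : ℝ) < 0
      rw [inner_add_left, real_inner_smul_left]
      exact add_neg_of_nonpos_of_neg hxu (mul_neg_of_pos_of_neg (by positivity) hiu)
    · show (inner ℝ (x + (1 / (n + 1 : ℝ)) • x₀) v : ℝ) < 0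
      rw [inner_add_left, real_inner_smul_left]
      exact add_neg_of_nonpos_of_neg hxv (mul_neg_of_pos_of_neg (by positivity) hiv)
    · have h1 : Filter.Tendsto (fun n : ℕ => (1 / (n + 1 : ℝ))) Filter.atTop (nhds 0) :=
        tendsto_one_div_add_atTop_nhds_zero_nat
      have h2 : Filter.Tendsto (fun n : ℕ => x + (1 / (n + 1 : ℝ)) • x₀) Filter.atTop
          (nhds (x + (0:ℝ) • x₀)) :=
        Filter.Tendsto.const_add _ (h1.smul_const x₀)
      simpa using h2
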